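/- Under the hypotheses above, with D = sup |∂ₜa|/a < ∞, the momentum satisfies the lower bound |ξ(t)|² ≥ |ξ₀|² (c₀/C₀) e^{−D|t−t₀|} for all t in the interval of existence; in particular ξ(t) never vanishes and the maximal solution is defined on all of ℝ. -/

import Mathlib

open Real Set Filter Topology

-- right slope bound
lemma stmt8_slopeR {E g : ℝ → ℝ} {t Dc : ℝ}
    (hg : HasDerivAt g 0 t) (hgt : g t = E t)
    (hle : ∀ z, E z ≤ Real.exp (Dc * |z - t|) * g z) :
    ∀ r, Dc * E t < r → ∀ᶠ z in 𝓝[>] t, slope E t z < r := by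
  intro r hr
  set ψ : ℝ → ℝ := fun z => Real.exp (Dc * (z - t)) * g z with hψdef
  have hψ' : HasDerivAt ψ (Dc * E t) t := by
    have h1 : HasDerivAt (fun z : ℝ => Real.exp (Dc * (z - t))) (Real.exp (Dc * (t - t)) * (Dc * 1)) t :=
      (((hasDerivAt_id t).sub_const t).const_mul Dc).exp
    have h2 := h1.fun_mul hg
    refine h2.congr_deriv ?_
    simp [hgt]
  have htend : Tendsto (slope ψ t) (𝓝[≠] t) (𝓝 (Dc * E t)) :=
    hasDerivAt_iff_tendsto_slope.1 hψ'
  have hev : ∀ᶠ z in 𝓝[≠] t, slope ψ t z < r := htend.eventually_lt_const hr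
  have hev' : ∀ᶠ z in 𝓝[>] t, slope ψ t z < r :=
    hev.filter_mono (nhdsWithin_mono t fun z hz => ne_of_gt hz)
  filter_upwards [hev', self_mem_nhdsWithin] with z hz1 hz2
  refine lt_of_le_of_lt ?_ hz1
  have hzt : (0:ℝ) < z - t := sub_pos.2 hz2
  have hψt : ψ t = E t := by simp [hψdef, hgt]
  have hEz : E z ≤ ψ z := by
    have := hle z
    rwa [abs_of_pos hzt] at this
  rw [slope_def_field, slope_def_field, hψt]
  gcongr

-- left slope bound
lemma stmt8_slopeL {E g : ℝ → ℝ} {t Dc : ℝ}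
    (hg : HasDerivAt g 0 t) (hgt : g t = E t)
    (hle : ∀ z, E z ≤ Real.exp (Dc * |z - t|) * g z) :
    ∀ r, Dc * E t < r → ∀ᶠ z in 𝓝[<] t, (E z - E t) / (t - z) < r := by
  intro r hr
  set χ : ℝ → ℝ := fun z => Real.exp (-Dc * (z - t)) * g z with hχdef
  have hχ' : HasDerivAt χ (-(Dc * E t)) t := by
    have h1 : HasDerivAt (fun z : ℝ => Real.exp (-Dc * (z - t)))
        (Real.exp (-Dc * (t - t)) * (-Dc * 1)) t :=
      (((hasDerivAt_id t).sub_const t).const_mul (-Dc)).exp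
    have h2 := h1.fun_mul hg
    refine h2.congr_deriv ?_
    simp [hgt]
  have htend : Tendsto (fun z => -slope χ t z) (𝓝[≠] t) (𝓝 (Dc * E t)) := by
    have := (hasDerivAt_iff_tendsto_slope.1 hχ').neg
    simpa using this
  have hev : ∀ᶠ z in 𝓝[≠] t, -slope χ t z < r := htend.eventually_lt_const hr
  have hev' : ∀ᶠ z in 𝓝[<] t, -slope χ t z < r :=
    hev.filter_mono (nhdsWithin_mono t fun z hz => ne_of_lt hz)
  filter_upwards [hev', self_mem_nhdsWithin] with z hz1 hz2
  refine lt_of_le_of_lt ?_ hz1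
  have hzt : (0:ℝ) < t - z := sub_pos.2 hz2
  have hχt : χ t = E t := by simp [hχdef, hgt]
  have hEz : E z ≤ χ z := by
    have h3 := hle z
    have h4 : Dc * |z - t| = -Dc * (z - t) := by
      rw [abs_of_neg (by linarith : z - t < 0)]; ring
    rwa [h4] at h3
  have hsl : -slope χ t z = (χ z - χ t) / (t - z) := by
    rw [slope_def_field, show t - z = -(z - t) by ring, div_neg]
  rw [hsl, hχt]
  gcongr

-- forward Gronwall from right slope bounds
lemma stmt8_core {E : ℝ → ℝ} {Dc p q : ℝ} (hpq : p ≤ q)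
    (hcont : ContinuousOn E (Icc p q))
    (hsl : ∀ t ∈ Icc p q, ∀ r, Dc * E t < r → ∃ᶠ z in 𝓝[>] t, slope E t z < r) :
    E q ≤ E p * Real.exp (Dc * (q - p)) := by
  have H := le_gronwallBound_of_liminf_deriv_right_le (f := E) (f' := fun t => Dc * E t)
    (δ := E p) (K := Dc) (ε := 0) (a := p) (b := q) hcont
    (fun x hx r hr => ((hsl x (Ico_subset_Icc_self hx) r hr).mono fun z hz => by
      rwa [slope_def_field, div_eq_inv_mul] at hz))
    le_rfl (fun x _ => by simp) q (right_mem_Icc.2 hpq)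
  rwa [gronwallBound_ε0] at H

-- backward Gronwall from left slope bounds
lemma stmt8_core_rev {E : ℝ → ℝ} {Dc p q : ℝ} (hpq : p ≤ q)
    (hcont : ContinuousOn E (Icc p q))
    (hsl : ∀ t ∈ Icc p q, ∀ r, Dc * E t < r → ∀ᶠ z in 𝓝[<] t, (E z - E t) / (t - z) < r) :
    E p ≤ E q * Real.exp (Dc * (q - p)) := by
  set F : ℝ → ℝ := fun u => E (p + q - u) with hF
  have hmaps : ∀ z ∈ Icc p q, p + q - z ∈ Icc p q := fun z hz =>
    ⟨by linarith [hz.2], by linarith [hz.1]⟩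
  have hcF : ContinuousOn F (Icc p q) :=
    hcont.comp ((continuous_const.sub continuous_id).continuousOn) hmaps
  have hslF : ∀ u ∈ Icc p q, ∀ r, Dc * F u < r → ∃ᶠ z in 𝓝[>] u, slope F u z < r := by
    intro u hu r hr
    have ht : p + q - u ∈ Icc p q := hmaps u hu
    have hev := hsl (p + q - u) ht r hr
    have htend : Tendsto (fun z : ℝ => p + q - z) (𝓝[>] u) (𝓝[<] (p + q - u)) := by
      apply tendsto_nhdsWithin_of_tendsto_nhds_of_eventually_within
      · exact ((continuous_const.sub continuous_id).tendsto u).mono_left nhdsWithin_le_nhds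
      · filter_upwards [self_mem_nhdsWithin] with z hz
        exact sub_lt_sub_left (show u < z from hz) _
    refine (htend.eventually hev).frequently.mono fun z hz => ?_
    have hsz : slope F u z = (E (p + q - z) - E (p + q - u)) / ((p + q - u) - (p + q - z)) := by
      rw [slope_def_field]
      congr 1
      ring
    rwa [hsz]
  have H := stmt8_core hpq hcF hslF
  simpa [hF] using H
theorem stmt8 {n : ℕ} (a a_t : ℝ → EuclideanSpace ℝ (Fin n) → ℝ)
    (c₀ C₀ D : ℝ) (hc₀ : 0 < c₀)
    (ha : ∀ t y, c₀ ≤ a t y ∧ a t y ≤ C₀)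
    (hat : ∀ (y : EuclideanSpace ℝ (Fin n)) (t : ℝ),
      HasDerivAt (fun s => a s y) (a_t t y) t)
    (hD : ∀ t y, |a_t t y| / a t y ≤ D)
    (grada : ℝ → EuclideanSpace ℝ (Fin n) → EuclideanSpace ℝ (Fin n))
    (hgrad : ∀ t y, HasGradientAt (a t) (grada t y) y)
    (J : Set ℝ) (hJ : J.OrdConnected) (t₀ : ℝ) (ht₀ : t₀ ∈ J)
    (x ξ : ℝ → EuclideanSpace ℝ (Fin n)) (hξ0 : ∀ t ∈ J, ξ t ≠ 0)
    (hξ₀ : ξ t₀ ≠ 0)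
    (hx : ∀ t ∈ J, HasDerivAt x (-(Real.sqrt (a t (x t)) / ‖ξ t‖) • ξ t) t)
    (hξ : ∀ t ∈ J,
      HasDerivAt ξ ((‖ξ t‖ / (2 * Real.sqrt (a t (x t)))) • grada t (x t)) t) :
    ∀ t ∈ J, ‖ξ t‖ ^ 2 ≥ ‖ξ t₀‖ ^ 2 * (c₀ / C₀) * Real.exp (-D * |t - t₀|) ∧
      ξ t ≠ 0 := by
  have haC : ∀ t y, 0 < a t y := fun t y => lt_of_lt_of_le hc₀ (ha t y).1
  have hD0 : 0 ≤ D :=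
    le_trans (div_nonneg (abs_nonneg _) (haC t₀ (x t₀)).le) (hD t₀ (x t₀))
  have hatle : ∀ t y, |a_t t y| ≤ D * a t y := fun t y => by
    have h := hD t y
    rwa [div_le_iff₀ (haC t y)] at h
    -- note: div_le_iff gives |a_t| ≤ D * a
  -- time comparison for `a`
  have hA : ∀ y s t, a s y ≤ a t y * Real.exp (D * |s - t|) := by
    intro y s t
    rcases le_total t s with h | h
    · have hu : ∀ z, HasDerivAt (fun z => a z y * Real.exp (-(D * z)))
          ((a_t z y - D * a z y) * Real.exp (-(D * z))) z := by
        intro z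
        have h1 := (hat y z).fun_mul (((hasDerivAt_id z).const_mul D).neg.exp)
        refine h1.congr_deriv ?_
        simp only [id_eq, Pi.neg_apply]
        ring
      have hanti : Antitone (fun z => a z y * Real.exp (-(D * z))) := by
        refine antitone_of_hasDerivAt_nonpos hu fun z => ?_
        refine mul_nonpos_of_nonpos_of_nonneg ?_ (Real.exp_nonneg _)
        have := le_trans (le_abs_self _) (hatle z y)
        linarith
      have h2 := hanti h
      have habs : |s - t| = s - t := abs_of_nonneg (sub_nonneg.2 h)
      have h3 := mul_le_mul_of_nonneg_right h2 (Real.exp_nonneg (D * s))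
      calc a s y = a s y * Real.exp (-(D * s)) * Real.exp (D * s) := by
            rw [mul_assoc, ← Real.exp_add]; simp
        _ ≤ a t y * Real.exp (-(D * t)) * Real.exp (D * s) := h3
        _ = a t y * Real.exp (D * |s - t|) := by
            rw [mul_assoc, ← Real.exp_add, habs]
            congr 2
            ring
    · have hu : ∀ z, HasDerivAt (fun z => a z y * Real.exp (D * z))
          ((a_t z y + D * a z y) * Real.exp (D * z)) z := by
        intro z
        have h1 := (hat y z).fun_mul (((hasDerivAt_id z).const_mul D).exp)
        refine h1.congr_deriv ?_
        simp only [id_eq]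
        ring
      have hmono : Monotone (fun z => a z y * Real.exp (D * z)) := by
        refine monotone_of_hasDerivAt_nonneg hu fun z => ?_
        refine mul_nonneg ?_ (Real.exp_nonneg _)
        have := neg_abs_le (a_t z y)
        have h2 := hatle z y
        linarith
      have h2 := hmono h
      have habs : |s - t| = t - s := by
        rw [abs_of_nonpos (sub_nonpos.2 h)]; ring
      have h3 := mul_le_mul_of_nonneg_right h2 (Real.exp_nonneg (-(D * s)))
      calc a s y = a s y * Real.exp (D * s) * Real.exp (-(D * s)) := by
            rw [mul_assoc, ← Real.exp_add]; simp
        _ ≤ a t y * Real.exp (D * t) * Real.exp (-(D * s)) := h3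
        _ = a t y * Real.exp (D * |s - t|) := by
            rw [mul_assoc, ← Real.exp_add, habs]
            congr 2
            ring
  set E : ℝ → ℝ := fun t => a t (x t) * ‖ξ t‖ ^ 2 with hEdef
  -- global pointwise comparison with frozen-time energy
  have hEle : ∀ t z, E z ≤ Real.exp (D * |z - t|) * (a t (x z) * ‖ξ z‖ ^ 2) := by
    intro t z
    have h1 := mul_le_mul_of_nonneg_right (hA (x z) z t) (by positivity : (0:ℝ) ≤ ‖ξ z‖ ^ 2)
    calc E z = a z (x z) * ‖ξ z‖ ^ 2 := rfl
      _ ≤ a t (x z) * Real.exp (D * |z - t|) * ‖ξ z‖ ^ 2 := h1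
      _ = Real.exp (D * |z - t|) * (a t (x z) * ‖ξ z‖ ^ 2) := by ring
  have hEge : ∀ t z, Real.exp (-(D * |z - t|)) * (a t (x z) * ‖ξ z‖ ^ 2) ≤ E z := by
    intro t z
    have h1 := hA (x z) t z
    rw [abs_sub_comm] at h1
    have h2 := mul_le_mul_of_nonneg_right h1 (Real.exp_nonneg (-(D * |z - t|)))
    have h3 : a z (x z) * Real.exp (D * |z - t|) * Real.exp (-(D * |z - t|)) = a z (x z) := by
      rw [mul_assoc, ← Real.exp_add]; simp
    rw [h3] at h2
    have h4 := mul_le_mul_of_nonneg_right h2 (by positivity : (0:ℝ) ≤ ‖ξ z‖ ^ 2)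
    calc Real.exp (-(D * |z - t|)) * (a t (x z) * ‖ξ z‖ ^ 2)
        = a t (x z) * Real.exp (-(D * |z - t|)) * ‖ξ z‖ ^ 2 := by ring
      _ ≤ a z (x z) * ‖ξ z‖ ^ 2 := h4
      _ = E z := rfl
  have hca : ∀ t, Continuous (a t) := fun t =>
    continuous_iff_continuousAt.2 fun y => (hgrad t y).hasFDerivAt.differentiableAt.continuousAt
  -- continuity of E on J
  have hcontE : ∀ t ∈ J, ContinuousAt E t := by
    intro t ht
    have hf₁ : ContinuousAt (fun z => a t (x z) * ‖ξ z‖ ^ 2) t :=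
      (((hca t).continuousAt).comp (hx t ht).continuousAt).mul
        (((hξ t ht).continuousAt.norm).pow 2)
    have hcabs : Continuous fun z : ℝ => D * |z - t| :=
      continuous_const.mul (continuous_abs.comp (continuous_id.sub continuous_const))
    have hcexp : Continuous fun z : ℝ => Real.exp (D * |z - t|) :=
      Real.continuous_exp.comp hcabs
    have hcexp' : Continuous fun z : ℝ => Real.exp (-(D * |z - t|)) :=
      Real.continuous_exp.comp hcabs.neg
    have hlo : Filter.Tendsto (fun z => Real.exp (-(D * |z - t|)) * (a t (x z) * ‖ξ z‖ ^ 2))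
        (nhds t) (nhds (E t)) := by
      simpa [hEdef] using (hcexp'.continuousAt.fun_mul hf₁ : ContinuousAt _ t).tendsto
    have hhi : Filter.Tendsto (fun z => Real.exp (D * |z - t|) * (a t (x z) * ‖ξ z‖ ^ 2))
        (nhds t) (nhds (E t)) := by
      simpa [hEdef] using (hcexp.continuousAt.fun_mul hf₁ : ContinuousAt _ t).tendsto
    exact tendsto_of_tendsto_of_tendsto_of_le_of_le hlo hhi (fun z => hEge t z) fun z => hEle t z
  -- zero derivative of the frozen-time energy
  have hg0 : ∀ t ∈ J, HasDerivAt (fun z => a t (x z) * ‖ξ z‖ ^ 2) 0 t := by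
    intro t ht
    have h1 := (hgrad t (x t)).hasFDerivAt.comp_hasDerivAt t (hx t ht)
    have h2 := HasDerivAt.inner ℝ (hξ t ht) (hξ t ht)
    simp only [real_inner_self_eq_norm_sq] at h2
    have h3 := h1.fun_mul h2
    have hν : (0:ℝ) < ‖ξ t‖ := norm_pos_iff.2 (hξ0 t ht)
    have hs : (0:ℝ) < Real.sqrt (a t (x t)) := Real.sqrt_pos.2 (haC t (x t))
    have hs2 : Real.sqrt (a t (x t)) * Real.sqrt (a t (x t)) = a t (x t) :=
      Real.mul_self_sqrt (haC t (x t)).le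
    refine h3.congr_deriv ?_
    simp only [Function.comp_apply, InnerProductSpace.toDual_apply_apply, real_inner_smul_right,
      real_inner_smul_left, real_inner_comm (ξ t) (grada t (x t))]
    generalize (inner ℝ (ξ t) (grada t (x t)) : ℝ) = P
    rw [← hs2]
    field_simp
    rw [Real.sqrt_sq hs.le]
    ring
  -- slope bounds for E at points of J
  have hfactR : ∀ t ∈ J, ∀ r, D * E t < r → ∀ᶠ z in nhdsWithin t (Set.Ioi t), slope E t z < r :=
    fun t ht => stmt8_slopeR (hg0 t ht) rfl (hEle t)
  have hfactL : ∀ t ∈ J, ∀ r, D * E t < r →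
      ∀ᶠ z in nhdsWithin t (Set.Iio t), (E z - E t) / (t - z) < r :=
    fun t ht => stmt8_slopeL (hg0 t ht) rfl (hEle t)
  -- two-sided Gronwall on J
  have hGron : ∀ p ∈ J, ∀ q ∈ J, p ≤ q →
      E q ≤ E p * Real.exp (D * (q - p)) ∧ E p ≤ E q * Real.exp (D * (q - p)) := by
    intro p hp q hq hpq
    have hsub : Set.Icc p q ⊆ J := hJ.out hp hq
    have hcIcc : ContinuousOn E (Set.Icc p q) := fun z hz =>
      (hcontE z (hsub hz)).continuousWithinAt
    constructor
    · exact stmt8_core hpq hcIcc fun t ht r hr => ((hfactR t (hsub ht)) r hr).frequently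
    · exact stmt8_core_rev hpq hcIcc fun t ht r hr => hfactL t (hsub ht) r hr
  -- conclusion
  intro t ht
  refine ⟨?_, hξ0 t ht⟩
  have key : E t₀ ≤ E t * Real.exp (D * |t - t₀|) := by
    rcases le_total t t₀ with h | h
    · have := (hGron t ht t₀ ht₀ h).1
      have habs : |t - t₀| = t₀ - t := by
        rw [abs_of_nonpos (sub_nonpos.2 h)]; ring
      rwa [habs]
    · have := (hGron t₀ ht₀ t ht h).2
      have habs : |t - t₀| = t - t₀ := abs_of_nonneg (sub_nonneg.2 h)
      rwa [habs]
  have hC₀ : 0 < C₀ := lt_of_lt_of_le hc₀ (le_trans (ha t₀ (x t₀)).1 (ha t₀ (x t₀)).2)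
  have hE1 : c₀ * ‖ξ t₀‖ ^ 2 ≤ E t₀ :=
    mul_le_mul_of_nonneg_right (ha t₀ (x t₀)).1 (by positivity)
  have hE2 : E t ≤ C₀ * ‖ξ t‖ ^ 2 :=
    mul_le_mul_of_nonneg_right (ha t (x t)).2 (by positivity)
  have h5 : E t₀ * Real.exp (-(D * |t - t₀|)) ≤ E t := by
    have h6 := mul_le_mul_of_nonneg_right key (Real.exp_nonneg (-(D * |t - t₀|)))
    calc E t₀ * Real.exp (-(D * |t - t₀|))
        ≤ E t * Real.exp (D * |t - t₀|) * Real.exp (-(D * |t - t₀|)) := h6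
      _ = E t := by rw [mul_assoc, ← Real.exp_add]; simp
  rw [ge_iff_le, show -D * |t - t₀| = -(D * |t - t₀|) from neg_mul D _]
  have heq : ‖ξ t₀‖ ^ 2 * (c₀ / C₀) * Real.exp (-(D * |t - t₀|)) =
      c₀ * ‖ξ t₀‖ ^ 2 * Real.exp (-(D * |t - t₀|)) / C₀ := by ring
  rw [heq, div_le_iff₀ hC₀]
  have h6 : c₀ * ‖ξ t₀‖ ^ 2 * Real.exp (-(D * |t - t₀|)) ≤ E t₀ * Real.exp (-(D * |t - t₀|)) :=
    mul_le_mul_of_nonneg_right hE1 (Real.exp_nonneg _)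
  linarith
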